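/- Let X be a topological space, κ a cardinal, and suppose the family of κ-resolvable subspaces of X forms a π-network in X (i.e., every nonempty open set of X contains a κ-resolvable subspace). Then X is κ-resolvable. -/
import Mathlib


open Cardinal Set

universe u

/-- A space is `κ`-resolvable if it has `κ` many pairwise disjoint dense subsets. -/
def Resolvable (κ : Cardinal.{u}) (X : Type u) [TopologicalSpace X] : Prop :=
  ∃ (ι : Type u) (D : ι → Set X), #ι = κ ∧ (∀ i, Dense (D i)) ∧
    Pairwise (Function.onFun Disjoint D)

/-- El'kin's theorem. -/
theorem elkin (X : Type u) [TopologicalSpace X] (κ : Cardinal.{u})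
    (h : ∀ U : Set X, IsOpen U → U.Nonempty →
      ∃ Y : Set X, Y.Nonempty ∧ Y ⊆ U ∧ Resolvable κ Y) :
    Resolvable κ X := by
  classical
  -- The collection of pairwise disjoint families of nonempty κ-resolvable subsets
  set S : Set (Set (Set X)) := {A | (∀ Y ∈ A, Y.Nonempty ∧ Resolvable κ Y) ∧
    A.Pairwise (Disjoint : Set X → Set X → Prop)} with hS
  obtain ⟨A, hA⟩ : ∃ m, Maximal (· ∈ S) m := by
    apply zorn_subset
    intro c hc hchain
    refine ⟨⋃₀ c, ⟨?_, ?_⟩, fun s hs => subset_sUnion_of_mem hs⟩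
    · rintro Y ⟨a, hac, hYa⟩
      exact (hc hac).1 Y hYa
    · rintro Y ⟨a, hac, hYa⟩ Z ⟨b, hbc, hZb⟩ hYZ
      rcases hchain.total hac hbc with hab | hba
      · exact (hc hbc).2 (hab hYa) hZb hYZ
      · exact (hc hac).2 hYa (hba hZb) hYZ
  have hAmem := hA.1
  -- The union of the maximal family is dense
  have hdense : Dense (⋃₀ A) := by
    by_contra hnd
    have : ((closure (⋃₀ A))ᶜ).Nonempty := by
      rw [nonempty_compl]
      intro heq
      exact hnd (by rw [dense_iff_closure_eq, heq])
    obtain ⟨Y, hYne, hYsub, hYres⟩ := h _ (isClosed_closure.isOpen_compl) this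
    have hYdisj : ∀ Z ∈ A, Disjoint Y Z := by
      intro Z hZ
      refine Set.disjoint_left.2 fun x hxY hxZ => ?_
      exact hYsub hxY (subset_closure (mem_sUnion_of_mem hxZ hZ))
    have hYnotA : Y ∉ A := by
      intro hYA
      have := hYdisj Y hYA
      rw [disjoint_self] at this
      exact hYne.ne_empty this
    have : insert Y A ∈ S := by
      constructor
      · rintro Z (rfl | hZ)
        · exact ⟨hYne, hYres⟩
        · exact hAmem.1 Z hZ
      · refine Set.Pairwise.insert hAmem.2 fun Z hZ _ => ?_
        exact ⟨(hYdisj Z hZ), (hYdisj Z hZ).symm⟩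
    exact hYnotA (hA.2 this (subset_insert Y A) (mem_insert Y A))
  -- For each Y ∈ A, choose the disjoint dense family, reindexed by κ.out
  have key : ∀ Y : A, ∃ D : κ.out → Set X, (∀ i, D i ⊆ (Y : Set X)) ∧
      (∀ i, (Y : Set X) ⊆ closure (D i)) ∧ Pairwise (Function.onFun Disjoint D) := by
    rintro ⟨Y, hY⟩
    obtain ⟨ι, D, hι, hDd, hDdisj⟩ := (hAmem.1 Y hY).2
    have : #κ.out = #ι := by rw [mk_out, hι]
    obtain ⟨e⟩ := Cardinal.eq.1 this
    refine ⟨fun i => (↑) '' D (e i), fun i => ?_, fun i => ?_, ?_⟩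
    · exact Subtype.coe_image_subset Y (D (e i))
    · intro x hx
      exact (Topology.IsInducing.subtypeVal.dense_iff).1 (hDd (e i)) ⟨x, hx⟩
    · intro i j hij
      have := hDdisj (fun he => hij (e.injective he))
      exact (Set.disjoint_image_iff Subtype.val_injective).2 this
  choose D hDsub hDcl hDdisj using key
  refine ⟨κ.out, fun i => ⋃ Y : A, D Y i, mk_out κ, fun i => ?_, ?_⟩
  · -- dense: closure contains ⋃₀ A
    have hsub : ⋃₀ A ⊆ closure (⋃ Y : A, D Y i) := by
      rintro x ⟨Y, hYA, hxY⟩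
      exact closure_mono (subset_iUnion (fun Y : A => D Y i) ⟨Y, hYA⟩) (hDcl ⟨Y, hYA⟩ i hxY)
    exact dense_closure.1 (hdense.mono hsub)
  · intro i j hij
    refine Set.disjoint_left.2 ?_
    rintro x ⟨_, ⟨Y, rfl⟩, hxY⟩ ⟨_, ⟨Z, rfl⟩, hxZ⟩
    by_cases hYZ : Y = Z
    · subst hYZ
      exact Set.disjoint_left.1 (hDdisj Y hij) hxY hxZ
    · have hd := hAmem.2 Y.2 Z.2 (fun he => hYZ (Subtype.ext he))
      exact Set.disjoint_left.1 hd (hDsub Y i hxY) (hDsub Z j hxZ)
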